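/- Let α > 0, μ̃ > 0, t ∈ (0,1] and φ ≥ 0 satisfy arctanh(√(1 − e^{−2μ̃t}))/√(α·μ̃) ≤ φ. Then the supremum, over all deterministic admissible strategies ζ on [0,t] with initial holdings φ, of ∫₀ᵗ ζ(r)·exp(−μ̃·r − α·∫₀ʳ ζ(v)² dv) dr is equal to √(1 − e^{−2μ̃t})/(2√(α·μ̃)). (This is case (i) of the log-quadratic impact problem, where g(ζ) = α·ζ².) -/

import Mathlib

/-- The inverse hyperbolic tangent, `arctanh x = (1/2) log ((1+x)/(1-x))`
(Mathlib has no `arctanh`, so we define it). -/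
noncomputable def Real.arctanh (x : ℝ) : ℝ := (1 / 2) * Real.log ((1 + x) / (1 - x))

open MeasureTheory intervalIntegral Set

/-- bounded measurable on an interval is interval integrable -/
lemma bdd_intInt {f : ℝ → ℝ} (hf : Measurable f) {B a b : ℝ}
    (hB : ∀ x ∈ Set.uIcc a b, |f x| ≤ B) : IntervalIntegrable f volume a b := by
  rw [intervalIntegrable_iff]
  refine Integrable.mono' (g := fun _ => B)
    (integrableOn_const measure_Ioc_lt_top.ne)
    hf.aestronglyMeasurable ?_
  rw [ae_restrict_iff' measurableSet_uIoc]
  exact Filter.Eventually.of_forall fun x hx => by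
    simpa using hB x ((Set.uIoc_subset_uIcc) hx)

lemma step_ineq {a b h : ℝ} (hab : a ≤ b) (hh : b - a ≤ h) :
    Real.exp (-a) * (b - a) ≤ (1 + h) * (Real.exp (-a) - Real.exp (-b)) := by
  have he : (b - a) + 1 ≤ Real.exp (b - a) := Real.add_one_le_exp _
  have hE : Real.exp (-b) * Real.exp (b - a) = Real.exp (-a) := by
    rw [← Real.exp_add]; ring_nf
  have hb' : 0 < Real.exp (-b) := Real.exp_pos _
  have key : (1 + (b - a)) * (Real.exp (-a) - Real.exp (-b)) ≥ Real.exp (-a) * (b - a) := by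
    nlinarith [mul_le_mul_of_nonneg_left he hb'.le]
  have h2 : (1 + (b-a)) * (Real.exp (-a) - Real.exp (-b)) ≤ (1 + h) * (Real.exp (-a) - Real.exp (-b)) := by
    apply mul_le_mul_of_nonneg_right (by linarith)
    have : Real.exp (-b) ≤ Real.exp (-a) := Real.exp_le_exp.2 (by linarith)
    linarith
  linarith

lemma key_exp_int {g : ℝ → ℝ} (hg : Measurable g) {C t : ℝ}
    (hg0 : ∀ x, 0 ≤ g x) (hgC : ∀ x, g x ≤ C) (ht : 0 ≤ t) :
    ∫ r in (0:ℝ)..t, g r * Real.exp (-∫ v in (0:ℝ)..r, g v) ≤ 1 := by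
  set G : ℝ → ℝ := fun r => ∫ v in (0:ℝ)..r, g v with hG
  have hC : 0 ≤ C := le_trans (hg0 0) (hgC 0)
  have habs : ∀ x, |g x| ≤ C := fun x => abs_le.2 ⟨by linarith [hg0 x], hgC x⟩
  have hgint : ∀ a b : ℝ, IntervalIntegrable g volume a b := fun a b =>
    bdd_intInt hg (fun x _ => habs x)
  have hGcont : Continuous G := intervalIntegral.continuous_primitive hgint 0
  have hGsub : ∀ x y : ℝ, G y - G x = ∫ v in x..y, g v := fun x y =>
    integral_interval_sub_left (hgint 0 y) (hgint 0 x)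
  have hGmono : Monotone G := by
    intro x y hxy
    have h0 : 0 ≤ ∫ v in x..y, g v :=
      intervalIntegral.integral_nonneg hxy (fun u _ => hg0 u)
    have := hGsub x y; linarith
  have hGdiff : ∀ x y : ℝ, x ≤ y → G y - G x ≤ C * (y - x) := by
    intro x y hxy
    rw [hGsub x y]
    calc ∫ v in x..y, g v ≤ ∫ _v in x..y, C :=
          intervalIntegral.integral_mono_on hxy (hgint x y) intervalIntegrable_const
            (fun u _ => hgC u)
      _ = C * (y - x) := by simp [mul_comm]
  have hG0 : G 0 = 0 := intervalIntegral.integral_same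
  have hGt0 : 0 ≤ G t := by rw [← hG0]; exact hGmono ht
  set F : ℝ → ℝ := fun r => g r * Real.exp (-G r) with hF
  have hFmeas : Measurable F := hg.mul (hGcont.neg.rexp.measurable)
  have hFint : ∀ a b : ℝ, 0 ≤ a → 0 ≤ b → IntervalIntegrable F volume a b := by
    intro a b ha hb
    apply bdd_intInt hFmeas (B := C)
    intro x hx
    have hx0 : 0 ≤ x := by
      rcases le_total a b with hab | hab
      · rw [Set.uIcc_of_le hab] at hx; linarith [hx.1]
      · rw [Set.uIcc_of_ge hab] at hx; linarith [hx.1]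
    have hGx : 0 ≤ G x := by rw [← hG0]; exact hGmono hx0
    have he1 : Real.exp (-G x) ≤ 1 := Real.exp_le_one_iff.2 (by linarith)
    have he0 : 0 < Real.exp (-G x) := Real.exp_pos _
    rw [abs_of_nonneg (mul_nonneg (hg0 x) he0.le)]
    calc g x * Real.exp (-G x) ≤ g x * 1 :=
          mul_le_mul_of_nonneg_left he1 (hg0 x)
      _ ≤ C := by simpa using hgC x
  -- main estimate for each n
  have hmain : ∀ n : ℕ, ∫ r in (0:ℝ)..t, F r ≤ 1 + C * t / (n+1) := by
    intro n
    set a : ℕ → ℝ := fun i => i * (t / (n+1)) with haa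
    have hstep : (0:ℝ) ≤ t / (n+1) := by positivity
    have ha_mono : ∀ i : ℕ, a i ≤ a (i+1) := by
      intro i
      simp only [haa]
      push_cast
      nlinarith [hstep]
    have ha_nonneg : ∀ i : ℕ, 0 ≤ a i := by
      intro i; simp only [haa]; positivity
    have ha0 : a 0 = 0 := by simp [haa]
    have han : a (n+1) = t := by
      simp only [haa]; push_cast; field_simp
    have hsum : ∑ k ∈ Finset.range (n+1), ∫ r in (a k)..(a (k+1)), F r
        = ∫ r in (0:ℝ)..t, F r := by
      rw [intervalIntegral.sum_integral_adjacent_intervals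
        (fun k _ => hFint (a k) (a (k+1)) (ha_nonneg k) (ha_nonneg (k+1)))]
      rw [ha0, han]
    have hpiece : ∀ k : ℕ, ∫ r in (a k)..(a (k+1)), F r
        ≤ (1 + C * t / (n+1)) * (Real.exp (-G (a k)) - Real.exp (-G (a (k+1)))) := by
      intro k
      have h1 : ∫ r in (a k)..(a (k+1)), F r
          ≤ ∫ r in (a k)..(a (k+1)), g r * Real.exp (-G (a k)) := by
        apply intervalIntegral.integral_mono_on (ha_mono k)
          (hFint _ _ (ha_nonneg k) (ha_nonneg (k+1)))
          ((hgint _ _).mul_const _)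
        intro u hu
        exact mul_le_mul_of_nonneg_left
          (Real.exp_le_exp.2 (neg_le_neg (hGmono hu.1))) (hg0 u)
      have h2 : ∫ r in (a k)..(a (k+1)), g r * Real.exp (-G (a k))
          = Real.exp (-G (a k)) * (G (a (k+1)) - G (a k)) := by
        rw [intervalIntegral.integral_mul_const, hGsub]
        ring
      have hDle : G (a (k+1)) - G (a k) ≤ C * t / (n+1) := by
        have := hGdiff (a k) (a (k+1)) (ha_mono k)
        have hd : a (k+1) - a k = t / (n+1) := by
          simp only [haa]; push_cast; ring
        rw [hd] at this
        calc G (a (k+1)) - G (a k) ≤ C * (t/(n+1)) := this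
          _ = C * t / (n+1) := by ring
      have h3 := step_ineq (hGmono (ha_mono k)) hDle
      linarith
    have htele : ∑ k ∈ Finset.range (n+1),
        (Real.exp (-G (a k)) - Real.exp (-G (a (k+1))))
        = Real.exp (-G (a 0)) - Real.exp (-G (a (n+1))) :=
      Finset.sum_range_sub' (fun k => Real.exp (-G (a k))) (n+1)
    have hfac : (0:ℝ) ≤ 1 + C * t / (n+1) := by positivity
    calc ∫ r in (0:ℝ)..t, F r
        = ∑ k ∈ Finset.range (n+1), ∫ r in (a k)..(a (k+1)), F r := hsum.symm
      _ ≤ ∑ k ∈ Finset.range (n+1),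
            (1 + C * t / (n+1)) * (Real.exp (-G (a k)) - Real.exp (-G (a (k+1)))) :=
          Finset.sum_le_sum (fun k _ => hpiece k)
      _ = (1 + C * t / (n+1)) * (Real.exp (-G (a 0)) - Real.exp (-G (a (n+1)))) := by
          rw [← Finset.mul_sum, htele]
      _ ≤ (1 + C * t / (n+1)) * 1 := by
          apply mul_le_mul_of_nonneg_left _ hfac
          rw [ha0, han, hG0]
          simp [Real.exp_zero]
          positivity
      _ = 1 + C * t / (n+1) := mul_one _
  -- take the limit
  have hlim : Filter.Tendsto (fun n : ℕ => 1 + C * t / (n+1)) Filter.atTop (nhds 1) := by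
    have h1 : Filter.Tendsto (fun n : ℕ => C * t / (n+1)) Filter.atTop (nhds 0) := by
      have := Filter.Tendsto.const_mul (C*t) tendsto_one_div_add_atTop_nhds_zero_nat
      simpa [div_eq_mul_inv, mul_assoc, mul_comm, mul_left_comm] using this
    simpa using Filter.Tendsto.const_add 1 h1
  exact ge_of_tendsto hlim (Filter.Eventually.of_forall hmain)

lemma exp_neg_two_mul_integral {c : ℝ} (hc : 0 < c) (a b : ℝ) :
    ∫ r in a..b, Real.exp (-2 * c * r)
      = (Real.exp (-2*c*a) - Real.exp (-2*c*b)) / (2*c) := by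
  have hd : ∀ r : ℝ, HasDerivAt (fun x => -(1/(2*c)) * Real.exp (-2*c*x))
      (Real.exp (-2*c*r)) r := by
    intro r
    have h1 : HasDerivAt (fun x : ℝ => -2*c*x) (-2*c) r := by
      simpa using (hasDerivAt_id r).const_mul (-2*c)
    have h2 := (Real.hasDerivAt_exp (-2*c*r)).comp r h1
    have h3 := h2.const_mul (-(1/(2*c)))
    convert h3 using 1 <;> try rfl
    field_simp
  have hcont : Continuous fun r : ℝ => Real.exp (-2*c*r) := by fun_prop
  rw [intervalIntegral.integral_eq_sub_of_hasDerivAt (fun r _ => hd r)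
    (hcont.intervalIntegrable a b)]
  field_simp
  ring

lemma upper_bound {α μ t : ℝ} (hα : 0 < α) (hμ : 0 < μ) (ht : 0 < t)
    {ζ : ℝ → ℝ} (hm : Measurable ζ) {M : ℝ} (hMb : ∀ x, ζ x ≤ M)
    (h0 : ∀ x, 0 ≤ ζ x) :
    ∫ r in (0:ℝ)..t, ζ r * Real.exp (-μ * r - α * ∫ v in (0:ℝ)..r, ζ v ^ 2)
      ≤ Real.sqrt (1 - Real.exp (-2 * μ * t)) / (2 * Real.sqrt (α * μ)) := by
  set E : ℝ := 1 - Real.exp (-2*μ*t) with hEdef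
  have hE : 0 < E := by
    have : Real.exp (-2*μ*t) < 1 := Real.exp_lt_one_iff.2 (by nlinarith [mul_pos hμ ht])
    simp [hEdef]; nlinarith [mul_pos hμ ht]
  set T : ℝ := Real.sqrt E / (2 * Real.sqrt (α*μ)) with hTdef
  have hαμ : 0 < α*μ := mul_pos hα hμ
  have hT : 0 < T := by
    apply div_pos (Real.sqrt_pos.2 hE)
    positivity
  set Y : ℝ := E / (2*μ) with hYdef
  have hY : 0 < Y := by positivity
  -- notation
  set A : ℝ → ℝ := fun r => ∫ v in (0:ℝ)..r, ζ v ^ 2 with hAdef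
  have hM : 0 ≤ M := le_trans (h0 0) (hMb 0)
  have hsqm : Measurable (fun v => ζ v ^ 2) := hm.pow_const 2
  have hsqb : ∀ x, |ζ x ^ 2| ≤ M^2 := by
    intro x
    rw [abs_of_nonneg (sq_nonneg _)]
    exact pow_le_pow_left₀ (h0 x) (hMb x) 2
  have hsqint : ∀ a b : ℝ, IntervalIntegrable (fun v => ζ v ^2) volume a b :=
    fun a b => bdd_intInt hsqm (fun x _ => hsqb x)
  have hAcont : Continuous A := intervalIntegral.continuous_primitive hsqint 0
  have hA0 : ∀ r, 0 ≤ r → 0 ≤ A r := fun r hr =>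
    intervalIntegral.integral_nonneg hr (fun u _ => sq_nonneg _)
  -- key integral bound
  have hkey : ∫ r in (0:ℝ)..t, ζ r ^ 2 * Real.exp (-(2*α*A r)) ≤ 1/(2*α) := by
    have h1 := key_exp_int (g := fun v => 2*α*ζ v^2)
      ((measurable_const).mul hsqm) (C := 2*α*M^2)
      (fun x => by positivity)
      (fun x => by
        have := le_abs_self (ζ x ^2)
        have := hsqb x
        try dsimp only
        nlinarith)
      ht.le
    have h2 : ∀ r : ℝ, (∫ v in (0:ℝ)..r, 2*α*ζ v^2) = 2*α*A r := fun r => by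
      rw [hAdef]; exact intervalIntegral.integral_const_mul _ _
    have h3 : (∫ r in (0:ℝ)..t, (2*α*ζ r^2) * Real.exp (-∫ v in (0:ℝ)..r, 2*α*ζ v^2))
        = 2*α * ∫ r in (0:ℝ)..t, ζ r ^2 * Real.exp (-(2*α*A r)) := by
      rw [← intervalIntegral.integral_const_mul]
      apply intervalIntegral.integral_congr
      intro r _
      dsimp only
      rw [h2 r]; ring
    rw [h3] at h1
    rw [le_div_iff₀ (by positivity : (0:ℝ) < 2*α)]
    linarith
  -- second integral
  have hI2' : ∫ r in (0:ℝ)..t, Real.exp (-2*μ*r) = Y := by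
    rw [exp_neg_two_mul_integral hμ 0 t, hYdef, hEdef]
    norm_num
  set l : ℝ := 2*α*T with hldef
  have hl : 0 < l := by positivity
  have hT2 : T^2 = E/(4*(α*μ)) := by
    rw [hTdef, div_pow, Real.sq_sqrt hE.le, mul_pow, Real.sq_sqrt hαμ.le]
    ring
  have hY2 : Y = 2*α*T^2 := by
    rw [hT2, hYdef]; field_simp; ring
  -- pointwise bound
  have hpt : ∀ r ∈ Set.Icc (0:ℝ) t,
      ζ r * Real.exp (-μ*r - α*A r)
        ≤ (l * (ζ r^2 * Real.exp (-(2*α*A r))) + (1/l) * Real.exp (-2*μ*r)) / 2 := by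
    intro r hr
    have hsplit : Real.exp (-μ*r - α*A r)
        = Real.exp (-(α*A r)) * Real.exp (-(μ*r)) := by
      rw [← Real.exp_add]; ring_nf
    set x := ζ r * Real.exp (-(α*A r)) with hx
    set y := Real.exp (-(μ*r)) with hy
    have hxy : ζ r * Real.exp (-μ*r - α*A r) = x * y := by rw [hsplit, hx, hy]; ring
    have hexp2 : Real.exp (-(α*A r))^2 = Real.exp (-(2*α*A r)) := by
      rw [sq, ← Real.exp_add]; ring_nf
    have hxx : l * x^2 = l * (ζ r^2 * Real.exp (-(2*α*A r))) := by
      rw [hx, mul_pow, hexp2]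
    have hyy : y^2 = Real.exp (-2*μ*r) := by
      rw [hy, sq, ← Real.exp_add]; ring_nf
    have hml : l * (1/l) = 1 := mul_one_div_cancel hl.ne'
    have hAM : x * y ≤ (l * x^2 + (1/l) * y^2)/2 := by
      nlinarith [mul_nonneg (by positivity : (0:ℝ) ≤ 1/l) (sq_nonneg (l*x - y)), hl]
    rw [hxy, ← hxx, ← hyy]
    exact hAM
  -- integrability
  have hVmeas : Measurable (fun r => ζ r * Real.exp (-μ*r - α*A r)) := by
    apply hm.mul
    exact (Real.continuous_exp.comp (by fun_prop)).measurable
  have hVint : IntervalIntegrable (fun r => ζ r * Real.exp (-μ*r - α*A r)) volume 0 t := by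
    apply bdd_intInt hVmeas (B := M)
    intro x hx
    rw [Set.uIcc_of_le ht.le] at hx
    have hAx : 0 ≤ A x := hA0 x hx.1
    have hexp : Real.exp (-μ*x - α*A x) ≤ 1 :=
      Real.exp_le_one_iff.2 (by nlinarith [mul_nonneg hμ.le hx.1, mul_nonneg hα.le hAx])
    have h1 : 0 ≤ ζ x * Real.exp (-μ*x - α*A x) :=
      mul_nonneg (h0 x) (Real.exp_pos _).le
    rw [abs_of_nonneg h1]
    calc ζ x * Real.exp (-μ*x - α*A x) ≤ ζ x * 1 :=
          mul_le_mul_of_nonneg_left hexp (h0 x)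
      _ ≤ M := by simpa using hMb x
  have hR1int : IntervalIntegrable (fun r => ζ r^2 * Real.exp (-(2*α*A r))) volume 0 t := by
    have hmeas1 : Measurable fun r => ζ r^2 * Real.exp (-(2*α*A r)) := by
      apply hsqm.mul
      have : Continuous fun r => Real.exp (-(2*α*A r)) := by fun_prop
      exact this.measurable
    apply bdd_intInt hmeas1 (B := M^2)
    intro x hx
    rw [Set.uIcc_of_le ht.le] at hx
    have hAx : 0 ≤ A x := hA0 x hx.1
    have hexp : Real.exp (-(2*α*A x)) ≤ 1 :=
      Real.exp_le_one_iff.2 (by nlinarith [mul_nonneg hα.le hAx])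
    have h1 : 0 ≤ ζ x^2 * Real.exp (-(2*α*A x)) :=
      mul_nonneg (sq_nonneg _) (Real.exp_pos _).le
    rw [abs_of_nonneg h1]
    calc ζ x^2 * Real.exp (-(2*α*A x)) ≤ ζ x^2 * 1 :=
          mul_le_mul_of_nonneg_left hexp (sq_nonneg _)
      _ ≤ M^2 := by
          have := hsqb x
          rw [abs_of_nonneg (sq_nonneg _)] at this
          simpa using this
  have hR2int : IntervalIntegrable (fun r => Real.exp (-2*μ*r)) volume 0 t := by
    have : Continuous fun r : ℝ => Real.exp (-2*μ*r) := by fun_prop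
    exact this.intervalIntegrable 0 t
  have hRint : IntervalIntegrable
      (fun r => (l * (ζ r^2 * Real.exp (-(2*α*A r))) + (1/l) * Real.exp (-2*μ*r)) / 2)
      volume 0 t := by
    apply IntervalIntegrable.div_const
    exact ((hR1int.const_mul l).add (hR2int.const_mul (1/l)))
  -- integrate the pointwise bound
  have hmono := intervalIntegral.integral_mono_on ht.le hVint hRint hpt
  have hsumint : (∫ r in (0:ℝ)..t,
      (l * (ζ r^2 * Real.exp (-(2*α*A r))) + (1/l) * Real.exp (-2*μ*r)) / 2)
      = (l * (∫ r in (0:ℝ)..t, ζ r^2 * Real.exp (-(2*α*A r))) + (1/l) * Y) / 2 := by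
    rw [intervalIntegral.integral_div, intervalIntegral.integral_add
      (hR1int.const_mul l) (hR2int.const_mul (1/l)),
      intervalIntegral.integral_const_mul, intervalIntegral.integral_const_mul, hI2']
  rw [hsumint] at hmono
  have hfinal : (l * (∫ r in (0:ℝ)..t, ζ r^2 * Real.exp (-(2*α*A r))) + (1/l) * Y) / 2 ≤ T := by
    have h1 : l * (∫ r in (0:ℝ)..t, ζ r^2 * Real.exp (-(2*α*A r))) ≤ l * (1/(2*α)) :=
      mul_le_mul_of_nonneg_left hkey hl.le
    have h2 : l * (1/(2*α)) = T := by rw [hldef]; field_simp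
    have h3 : (1/l) * Y = T := by rw [hldef, hY2]; field_simp
    linarith
  calc ∫ r in (0:ℝ)..t, ζ r * Real.exp (-μ * r - α * ∫ v in (0:ℝ)..r, ζ v ^ 2)
      = ∫ r in (0:ℝ)..t, ζ r * Real.exp (-μ*r - α*A r) := by rw [hAdef]
    _ ≤ T := le_trans hmono hfinal

lemma exp_sq' (x : ℝ) : Real.exp x ^ 2 = Real.exp (2*x) := by
  rw [sq, ← Real.exp_add]; ring_nf

lemma sqrt_exp_sub_one (x : ℝ) :
    Real.sqrt (Real.exp (2*x) - 1) = Real.exp x * Real.sqrt (1 - Real.exp (-(2*x))) := by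
  have he : Real.exp (2*x) * Real.exp (-(2*x)) = 1 := by
    rw [← Real.exp_add]; norm_num
  have h1 : Real.exp (2*x) - 1 = Real.exp x ^ 2 * (1 - Real.exp (-(2*x))) := by
    rw [exp_sq']; nlinarith [he]
  rw [h1, Real.sqrt_mul (sq_nonneg _), Real.sqrt_sq (Real.exp_nonneg x)]

lemma exp_half_log {x : ℝ} (hx : 0 < x) :
    Real.exp ((1/2) * Real.log x) = Real.sqrt x := by
  rw [Real.sqrt_eq_rpow, Real.rpow_def_of_pos hx, mul_comm]

lemma arctanh_eq {c : ℝ} (hc : 0 < c) :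
    Real.arctanh (Real.sqrt (1 - Real.exp (-(2*c))))
      = Real.log (Real.exp c + Real.sqrt (Real.exp (2*c) - 1)) := by
  set x := Real.sqrt (1 - Real.exp (-(2*c))) with hxdef
  have hel : Real.exp (-(2*c)) < 1 := Real.exp_lt_one_iff.2 (by linarith)
  have hx1 : x^2 = 1 - Real.exp (-(2*c)) := Real.sq_sqrt (by linarith)
  have hx0 : 0 ≤ x := Real.sqrt_nonneg _
  have hxlt : x < 1 := by nlinarith [Real.exp_pos (-(2*c))]
  have h1px : 0 < 1 + x := by linarith
  have h1mx : 0 < 1 - x := by linarith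
  have hprod : (1-x) = Real.exp (-(2*c)) / (1+x) := by
    rw [eq_div_iff h1px.ne']; nlinarith [hx1]
  have hlog : Real.log (1-x) = -(2*c) - Real.log (1+x) := by
    rw [hprod, Real.log_div (Real.exp_ne_zero _) h1px.ne', Real.log_exp]
  unfold Real.arctanh
  rw [Real.log_div h1px.ne' h1mx.ne', hlog]
  have h2 : (1/2)*(Real.log (1+x) - (-(2*c) - Real.log (1+x))) = Real.log (1+x) + c := by
    ring
  rw [h2]
  have h3 : Real.log (1+x) + c = Real.log ((1+x) * Real.exp c) := by
    rw [Real.log_mul h1px.ne' (Real.exp_ne_zero _), Real.log_exp]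
  rw [h3, sqrt_exp_sub_one]
  congr 1
  rw [hxdef]; ring

lemma deriv_id1 (m ss dd e1 : ℝ) (hss : ss ≠ 0) (hdd : dd ≠ 0) (he1 : e1 ≠ 0)
    (hsum : e1 + e1*dd ≠ 0) :
    m / ss / dd = -(1/ss) * ((e1*(-m) + e1^2*(-(2*m))/(2*(e1*dd))) / (e1+e1*dd)) := by
  have h1dd : 1 + dd ≠ 0 := fun h => hsum (by rw [show e1 + e1*dd = e1*(1+dd) by ring, h, mul_zero])
  field_simp
  ring

set_option maxHeartbeats 2000000 in
lemma lower_mem {α μ t φ : ℝ} (hα : 0 < α) (hμ : 0 < μ) (ht : 0 < t) (hφ : 0 ≤ φ)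
    (hcond : Real.arctanh (Real.sqrt (1 - Real.exp (-2 * μ * t))) /
        Real.sqrt (α * μ) ≤ φ)
    {ε : ℝ} (hε : 0 < ε) (hεt : ε < t) :
    ∃ ζ : ℝ → ℝ, Measurable ζ ∧
      (∃ M : ℝ, ∀ r ∈ Set.Icc (0 : ℝ) t, ζ r ≤ M) ∧
      (∀ r ∈ Set.Icc (0 : ℝ) t, 0 ≤ ζ r) ∧
      (∫ r in (0 : ℝ)..t, ζ r) ≤ φ ∧
      (∫ r in (0 : ℝ)..t,
          ζ r * Real.exp (-μ * r - α * ∫ v in (0 : ℝ)..r, ζ v ^ 2))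
        = (Real.sqrt (μ/α) / Real.sqrt (1 - Real.exp (-2*μ*t)))
            * ((1 - Real.exp (-2*μ*(t-ε))) / (2*μ)) := by
  set s : ℝ := t - ε with hsdef
  have hs0 : 0 < s := by simp [hsdef]; linarith
  have hst : s < t := by simp [hsdef]; linarith
  -- the strategy
  set D : ℝ → ℝ := fun r => 1 - Real.exp (-2*μ*(t-r)) with hDdef
  set f : ℝ → ℝ := fun r => Real.sqrt (μ/α) / Real.sqrt (D r) with hfdef
  set ζ : ℝ → ℝ := fun r => if r ≤ s then f r else 0 with hζdef
  have hDcont : Continuous D := by fun_prop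
  have hDpos : ∀ r, r < t → 0 < D r := by
    intro r hr
    have : Real.exp (-2*μ*(t-r)) < 1 := Real.exp_lt_one_iff.2 (by nlinarith)
    simp only [hDdef]; linarith
  have hDges : ∀ r, r ≤ s → D s ≤ D r := by
    intro r hr
    simp only [hDdef]
    have : Real.exp (-2*μ*(t-r)) ≤ Real.exp (-2*μ*(t-s)) :=
      Real.exp_le_exp.2 (by nlinarith)
    linarith
  have hDspos : 0 < D s := hDpos s hst
  have hfm : Measurable f := by
    apply Measurable.div measurable_const
    exact (Real.continuous_sqrt.comp hDcont).measurable
  have hζm : Measurable ζ := Measurable.ite measurableSet_Iic hfm measurable_const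
  set M : ℝ := Real.sqrt (μ/α) / Real.sqrt (D s) with hMdef
  have hM0 : 0 ≤ M := by positivity
  have hζ0 : ∀ x, 0 ≤ ζ x := by
    intro x
    simp only [hζdef]
    split
    · positivity
    · exact le_refl 0
  have hζM : ∀ x, ζ x ≤ M := by
    intro x
    simp only [hζdef]
    split
    · next hx =>
      simp only [hfdef, hMdef]
      apply div_le_div_of_nonneg_left (Real.sqrt_nonneg _) (Real.sqrt_pos.2 hDspos)
      exact Real.sqrt_le_sqrt (hDges x hx)
    · exact hM0
  -- A and its closed form
  have hζsqm : Measurable fun v => ζ v ^ 2 := hζm.pow_const 2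
  have hζsqb : ∀ x, |ζ x ^ 2| ≤ M^2 := by
    intro x
    rw [abs_of_nonneg (sq_nonneg _)]
    exact pow_le_pow_left₀ (hζ0 x) (hζM x) 2
  have hsqint : ∀ a b : ℝ, IntervalIntegrable (fun v => ζ v ^2) volume a b :=
    fun a b => bdd_intInt hζsqm (fun x _ => hζsqb x)
  set g : ℝ → ℝ := fun r => Real.exp (-2*μ*r) - Real.exp (-2*μ*t) with hgdef
  have hgpos : ∀ r, r < t → 0 < g r := by
    intro r hr
    simp only [hgdef]
    have : Real.exp (-2*μ*t) < Real.exp (-2*μ*r) := Real.exp_lt_exp.2 (by nlinarith)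
    linarith
  have hgfact : ∀ r, g r = Real.exp (-2*μ*r) * D r := by
    intro r
    have hrel : Real.exp (-2*μ*r) * Real.exp (-2*μ*(t-r)) = Real.exp (-2*μ*t) := by
      rw [← Real.exp_add]; ring_nf
    simp only [hgdef, hDdef]
    linear_combination hrel
  set Ψ : ℝ → ℝ := fun r => -(1/(2*α)) * Real.log (g r) with hΨdef
  have hΨd : ∀ x, x ≤ s → HasDerivAt Ψ (f x ^ 2) x := by
    intro x hx
    have hxt : x < t := lt_of_le_of_lt hx hst
    have hgx : 0 < g x := hgpos x hxt
    have h1 : HasDerivAt (fun y : ℝ => -2*μ*y) (-2*μ) x := by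
      simpa using (hasDerivAt_id x).const_mul (-2*μ)
    have h2 : HasDerivAt g (Real.exp (-2*μ*x) * (-2*μ)) x := by
      simpa [hgdef] using ((Real.hasDerivAt_exp _).comp x h1).sub_const (Real.exp (-2*μ*t))
    have h3 := (h2.log hgx.ne').const_mul (-(1/(2*α)))
    convert h3 using 1 <;> try rfl
    have hfx2 : f x ^ 2 = (μ/α) / D x := by
      simp only [hfdef, div_pow]
      rw [Real.sq_sqrt (div_nonneg hμ.le hα.le), Real.sq_sqrt (hDpos x hxt).le]
    rw [hfx2]
    have hDx : 0 < D x := hDpos x hxt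
    have hgf := hgfact x
    have hex : (0:ℝ) < Real.exp (-2*μ*x) := Real.exp_pos _
    rw [hgf]
    field_simp
  have hAeq : ∀ r ∈ Set.Icc (0:ℝ) s, (∫ v in (0:ℝ)..r, ζ v ^2) = Ψ r - Ψ 0 := by
    intro r hr
    have h1 : (∫ v in (0:ℝ)..r, ζ v ^2) = ∫ v in (0:ℝ)..r, f v ^2 := by
      apply intervalIntegral.integral_congr
      intro v hv
      rw [Set.uIcc_of_le hr.1] at hv
      have : v ≤ s := le_trans hv.2 hr.2
      simp only [hζdef, if_pos this]
    rw [h1]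
    apply intervalIntegral.integral_eq_sub_of_hasDerivAt
    · intro x hx
      rw [Set.uIcc_of_le hr.1] at hx
      exact hΨd x (le_trans hx.2 hr.2)
    · apply bdd_intInt (hfm.pow_const 2) (B := M^2)
      intro x hx
      rw [Set.uIcc_of_le hr.1] at hx
      have hxs : x ≤ s := le_trans hx.2 hr.2
      rw [abs_of_nonneg (sq_nonneg _)]
      apply pow_le_pow_left₀ (by positivity)
      simp only [hfdef, hMdef]
      apply div_le_div_of_nonneg_left (Real.sqrt_nonneg _) (Real.sqrt_pos.2 hDspos)
      exact Real.sqrt_le_sqrt (hDges x hxs)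
  -- positive constants
  have hg0pos : 0 < g 0 := hgpos 0 ht
  have hg0val : g 0 = 1 - Real.exp (-2*μ*t) := by simp [hgdef]
  set K : ℝ := Real.sqrt (μ/α) / Real.sqrt (1 - Real.exp (-2*μ*t)) with hKdef
  -- pointwise value identity on [0,s]
  have hWeq : ∀ r ∈ Set.Icc (0:ℝ) s,
      ζ r * Real.exp (-μ * r - α * ∫ v in (0:ℝ)..r, ζ v ^ 2)
        = K * Real.exp (-2*μ*r) := by
    intro r hr
    have hrt : r < t := lt_of_le_of_lt hr.2 hst
    have hgr : 0 < g r := hgpos r hrt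
    have hDr : 0 < D r := hDpos r hrt
    rw [hAeq r hr]
    have hexp1 : -μ*r - α*(Ψ r - Ψ 0)
        = -μ*r + (1/2)*Real.log (g r) + -((1/2)*Real.log (g 0)) := by
      simp only [hΨdef]; field_simp; ring
    rw [hexp1, Real.exp_add, Real.exp_add, Real.exp_neg, exp_half_log hgr,
      exp_half_log hg0pos]
    have hζr : ζ r = f r := by simp only [hζdef, if_pos hr.2]
    have hgrf : g r = Real.exp (-μ*r) ^ 2 * D r := by
      rw [hgfact r, exp_sq', show 2*(-μ*r) = -2*μ*r from by ring]
    have hsqgr : Real.sqrt (g r) = Real.exp (-μ*r) * Real.sqrt (D r) := by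
      rw [hgrf, Real.sqrt_mul (sq_nonneg _), Real.sqrt_sq (Real.exp_nonneg _)]
    rw [hζr, hsqgr, hg0val]
    have hsd : (0:ℝ) < Real.sqrt (D r) := Real.sqrt_pos.2 hDr
    have he2 : Real.exp (-μ*r) * Real.exp (-μ*r) = Real.exp (-2*μ*r) := by
      rw [← Real.exp_add]; ring_nf
    have habs : ∀ (q d e x : ℝ), d ≠ 0 →
        q / d * (x * (x * d) * e⁻¹) = q / e * (x * x) := by
      intro q d e x hd
      rcases eq_or_ne e 0 with he | he
      · simp [he]
      · field_simp
    have hinst := habs (Real.sqrt (μ/α)) (Real.sqrt (D r))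
      (Real.sqrt (1 - Real.exp (-2*μ*t))) (Real.exp (-μ*r)) hsd.ne'
    simp only [hfdef, hKdef]
    linear_combination hinst + (Real.sqrt (μ/α) / Real.sqrt (1 - Real.exp (-2*μ*t))) * he2
  -- integrability of the value integrand
  have hAcont : Continuous fun r => ∫ v in (0:ℝ)..r, ζ v ^ 2 :=
    intervalIntegral.continuous_primitive hsqint 0
  have hA0 : ∀ r, 0 ≤ r → 0 ≤ ∫ v in (0:ℝ)..r, ζ v ^ 2 := fun r hr =>
    intervalIntegral.integral_nonneg hr (fun u _ => sq_nonneg _)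
  set W : ℝ → ℝ := fun r => ζ r * Real.exp (-μ * r - α * ∫ v in (0:ℝ)..r, ζ v ^ 2)
    with hWdef
  have hWm : Measurable W := by
    apply hζm.mul
    have h1 : Continuous fun r : ℝ => -μ * r - α * ∫ v in (0:ℝ)..r, ζ v ^ 2 := by
      apply Continuous.sub
      · fun_prop
      · exact continuous_const.mul hAcont
    exact (Real.continuous_exp.comp h1).measurable
  have hWint : ∀ a b : ℝ, 0 ≤ a → 0 ≤ b → IntervalIntegrable W volume a b := by
    intro a b ha hb
    apply bdd_intInt hWm (B := M)
    intro x hx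
    have hx0 : 0 ≤ x := by
      rcases le_total a b with hab | hab
      · rw [Set.uIcc_of_le hab] at hx; linarith [hx.1]
      · rw [Set.uIcc_of_ge hab] at hx; linarith [hx.1]
    have hexp : Real.exp (-μ*x - α * ∫ v in (0:ℝ)..x, ζ v ^2) ≤ 1 := by
      apply Real.exp_le_one_iff.2
      nlinarith [mul_nonneg hμ.le hx0, mul_nonneg hα.le (hA0 x hx0)]
    have h1 : 0 ≤ W x := mul_nonneg (hζ0 x) (Real.exp_pos _).le
    rw [abs_of_nonneg h1]
    calc W x ≤ ζ x * 1 := mul_le_mul_of_nonneg_left hexp (hζ0 x)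
      _ ≤ M := by simpa using hζM x
  -- value of the integral
  have hval : (∫ r in (0:ℝ)..t, W r) = K * ((1 - Real.exp (-2*μ*s)) / (2*μ)) := by
    have hsplit : (∫ r in (0:ℝ)..s, W r) + (∫ r in s..t, W r) = ∫ r in (0:ℝ)..t, W r :=
      intervalIntegral.integral_add_adjacent_intervals
        (hWint 0 s le_rfl hs0.le) (hWint s t hs0.le (by linarith))
    have hzero : (∫ r in s..t, W r) = 0 := by
      rw [intervalIntegral.integral_congr_ae (g := fun _ => (0:ℝ))]
      · exact intervalIntegral.integral_zero
      · filter_upwards with x hx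
        rw [Set.uIoc_of_le hst.le] at hx
        simp only [hWdef, hζdef, if_neg (not_le.2 hx.1), zero_mul]
    have hmain : (∫ r in (0:ℝ)..s, W r) = K * ((1 - Real.exp (-2*μ*s)) / (2*μ)) := by
      have h1 : (∫ r in (0:ℝ)..s, W r) = ∫ r in (0:ℝ)..s, K * Real.exp (-2*μ*r) := by
        apply intervalIntegral.integral_congr
        intro r hrr
        rw [Set.uIcc_of_le hs0.le] at hrr
        exact hWeq r hrr
      rw [h1, intervalIntegral.integral_const_mul, exp_neg_two_mul_integral hμ 0 s]
      norm_num
    linarith [hsplit, hzero, hmain]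
  -- the budget
  set sam : ℝ := Real.sqrt (α*μ) with hsamdef
  have hsam : 0 < sam := Real.sqrt_pos.2 (mul_pos hα hμ)
  have hμα : Real.sqrt (μ/α) = μ / sam := by
    rw [eq_div_iff hsam.ne', hsamdef, ← Real.sqrt_mul (div_nonneg hμ.le hα.le),
      show μ/α*(α*μ) = μ^2 from by field_simp, Real.sqrt_sq hμ.le]
  set L : ℝ → ℝ := fun r => Real.exp (μ*(t-r)) + Real.sqrt (Real.exp (2*μ*(t-r)) - 1)
    with hLdef
  set Φ : ℝ → ℝ := fun r => -(1/sam) * Real.log (L r) with hΦdef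
  have hΦd : ∀ x, x ≤ s → HasDerivAt Φ (f x) x := by
    intro x hx
    have hxt : x < t := lt_of_le_of_lt hx hst
    have hE1 : (0:ℝ) < Real.exp (μ*(t-x)) := Real.exp_pos _
    have hE2gt : (1:ℝ) < Real.exp (2*μ*(t-x)) := by
      rw [show (1:ℝ) = Real.exp 0 from (Real.exp_zero).symm]
      exact Real.exp_lt_exp.2 (by nlinarith)
    have hin : (0:ℝ) < Real.exp (2*μ*(t-x)) - 1 := by linarith
    -- derivative of inner pieces
    have hd1 : HasDerivAt (fun y : ℝ => μ*(t-y)) (-μ) x := by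
      have : (fun y : ℝ => μ*(t-y)) = fun y => μ*t + (-μ)*y := by funext y; ring
      rw [this]
      simpa using ((hasDerivAt_id x).const_mul (-μ)).const_add (μ*t)
    have hd2 : HasDerivAt (fun y : ℝ => 2*μ*(t-y)) (-(2*μ)) x := by
      have : (fun y : ℝ => 2*μ*(t-y)) = fun y => 2*μ*t + (-(2*μ))*y := by funext y; ring
      rw [this]
      simpa using ((hasDerivAt_id x).const_mul (-(2*μ))).const_add (2*μ*t)
    have hdE1 : HasDerivAt (fun y : ℝ => Real.exp (μ*(t-y)))
        (Real.exp (μ*(t-x)) * (-μ)) x := (Real.hasDerivAt_exp _).comp x hd1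
    have hdS : HasDerivAt (fun y : ℝ => Real.sqrt (Real.exp (2*μ*(t-y)) - 1))
        ((Real.exp (2*μ*(t-x)) * (-(2*μ))) / (2*Real.sqrt (Real.exp (2*μ*(t-x)) - 1))) x := by
      exact (((Real.hasDerivAt_exp _).comp x hd2).sub_const 1).sqrt hin.ne'
    have hLx : 0 < L x := by
      simp only [hLdef]; positivity
    have hdL : HasDerivAt L
        (Real.exp (μ*(t-x)) * (-μ)
          + (Real.exp (2*μ*(t-x)) * (-(2*μ))) / (2*Real.sqrt (Real.exp (2*μ*(t-x)) - 1))) x := by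
      simp only [hLdef]
      exact hdE1.add hdS
    have h3 := (hdL.log hLx.ne').const_mul (-(1/sam))
    convert h3 using 1 <;> try rfl
    -- the derivative identity
    set E1 : ℝ := Real.exp (μ*(t-x)) with hE1def
    set sd : ℝ := Real.sqrt (D x) with hsddef
    have hsd : 0 < sd := Real.sqrt_pos.2 (hDpos x hxt)
    have hE2 : Real.exp (2*μ*(t-x)) = E1^2 := by
      rw [hE1def, exp_sq', show 2*(μ*(t-x)) = 2*μ*(t-x) from by ring]
    have hS : Real.sqrt (Real.exp (2*μ*(t-x)) - 1) = E1 * sd := by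
      rw [show 2*μ*(t-x) = 2*(μ*(t-x)) from by ring, sqrt_exp_sub_one, hsddef]
      congr 2
      simp only [hDdef]
      congr 2
      ring
    rw [hfdef]
    simp only []
    rw [hμα, hS, hE2]
    have hLxv : L x = E1 + E1 * sd := by
      simp only [hLdef]; rw [hS, hE1def]
    rw [hLxv]
    have hsum : E1 + E1 * sd ≠ 0 := by positivity
    linear_combination deriv_id1 μ sam sd E1 hsam.ne' hsd.ne' hE1.ne' hsum
  have hbudget : (∫ r in (0:ℝ)..t, ζ r) ≤ φ := by
    have hζint : ∀ a b : ℝ, IntervalIntegrable ζ volume a b := fun a b =>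
      bdd_intInt hζm (B := M) (fun x _ => abs_le.2 ⟨by linarith [hζ0 x], hζM x⟩)
    have hsplit : (∫ r in (0:ℝ)..s, ζ r) + (∫ r in s..t, ζ r) = ∫ r in (0:ℝ)..t, ζ r :=
      intervalIntegral.integral_add_adjacent_intervals (hζint 0 s) (hζint s t)
    have hzero : (∫ r in s..t, ζ r) = 0 := by
      rw [intervalIntegral.integral_congr_ae (g := fun _ => (0:ℝ))]
      · exact intervalIntegral.integral_zero
      · filter_upwards with x hx
        rw [Set.uIoc_of_le hst.le] at hx
        simp only [hζdef, if_neg (not_le.2 hx.1)]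
    have hfs : (∫ r in (0:ℝ)..s, ζ r) = Φ s - Φ 0 := by
      have h1 : (∫ r in (0:ℝ)..s, ζ r) = ∫ r in (0:ℝ)..s, f r := by
        apply intervalIntegral.integral_congr
        intro v hv
        rw [Set.uIcc_of_le hs0.le] at hv
        simp only [hζdef, if_pos hv.2]
      rw [h1]
      apply intervalIntegral.integral_eq_sub_of_hasDerivAt
      · intro x hxx
        rw [Set.uIcc_of_le hs0.le] at hxx
        exact hΦd x hxx.2
      · apply bdd_intInt hfm (B := M)
        intro x hxx
        rw [Set.uIcc_of_le hs0.le] at hxx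
        have hfx0 : 0 ≤ f x := by simp only [hfdef]; positivity
        rw [abs_of_nonneg hfx0]
        simp only [hfdef, hMdef]
        apply div_le_div_of_nonneg_left (Real.sqrt_nonneg _) (Real.sqrt_pos.2 hDspos)
        exact Real.sqrt_le_sqrt (hDges x hxx.2)
    have hΦval : Φ s - Φ 0 = (1/sam) * (Real.log (L 0) - Real.log (L s)) := by
      simp only [hΦdef]; ring
    have hLs1 : 1 ≤ L s := by
      simp only [hLdef]
      have h1 : (1:ℝ) ≤ Real.exp (μ*(t-s)) := Real.one_le_exp (by nlinarith)
      have h2 : (0:ℝ) ≤ Real.sqrt (Real.exp (2*μ*(t-s)) - 1) := Real.sqrt_nonneg _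
      linarith
    have hlogLs : 0 ≤ Real.log (L s) := Real.log_nonneg hLs1
    have harct : Real.log (L 0) = Real.arctanh (Real.sqrt (1 - Real.exp (-2*μ*t))) := by
      have h0 : L 0 = Real.exp (μ*t) + Real.sqrt (Real.exp (2*(μ*t)) - 1) := by
        simp only [hLdef, sub_zero]
        rw [show 2*μ*t = 2*(μ*t) from by ring]
      rw [h0, ← arctanh_eq (mul_pos hμ ht)]
      congr 3
      ring
    have hle : Φ s - Φ 0 ≤ (1/sam) * Real.log (L 0) := by
      rw [hΦval]
      have : Real.log (L 0) - Real.log (L s) ≤ Real.log (L 0) := by linarith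
      apply mul_le_mul_of_nonneg_left this (by positivity)
    have hfin : (1/sam) * Real.log (L 0) ≤ φ := by
      rw [harct]
      calc (1/sam) * Real.arctanh (Real.sqrt (1 - Real.exp (-2*μ*t)))
          = Real.arctanh (Real.sqrt (1 - Real.exp (-2*μ*t))) / sam := by ring
        _ ≤ φ := hcond
    linarith [hsplit, hzero, hfs, hle, hfin]
  exact ⟨ζ, hζm, ⟨M, fun r _ => hζM r⟩, fun r _ => hζ0 r, hbudget, hval⟩

set_option maxHeartbeats 1000000 in
/-- case (i) of the log-quadratic impact problem `g(ζ) = α ζ²`: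
if `arctanh (√(1 - e^{-2 μ t})) / √(α μ) ≤ φ`, the supremum over deterministic
admissible strategies of the discounted proceeds equals
`√(1 - e^{-2 μ t}) / (2 √(α μ))`. -/
theorem logQuadratic_value_case_i (α μ t φ : ℝ) (hα : 0 < α) (hμ : 0 < μ)
    (ht : t ∈ Set.Ioc (0 : ℝ) 1) (hφ : 0 ≤ φ)
    (hcond : Real.arctanh (Real.sqrt (1 - Real.exp (-2 * μ * t))) /
        Real.sqrt (α * μ) ≤ φ) :
    sSup {y : ℝ | ∃ ζ : ℝ → ℝ, Measurable ζ ∧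
        (∃ M : ℝ, ∀ r ∈ Set.Icc (0 : ℝ) t, ζ r ≤ M) ∧
        (∀ r ∈ Set.Icc (0 : ℝ) t, 0 ≤ ζ r) ∧
        (∫ r in (0 : ℝ)..t, ζ r) ≤ φ ∧
        y = ∫ r in (0 : ℝ)..t,
              ζ r * Real.exp (-μ * r - α * ∫ v in (0 : ℝ)..r, ζ v ^ 2)}
      = Real.sqrt (1 - Real.exp (-2 * μ * t)) / (2 * Real.sqrt (α * μ)) := by
  obtain ⟨ht0, ht1⟩ := ht
  set S := {y : ℝ | ∃ ζ : ℝ → ℝ, Measurable ζ ∧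
        (∃ M : ℝ, ∀ r ∈ Set.Icc (0 : ℝ) t, ζ r ≤ M) ∧
        (∀ r ∈ Set.Icc (0 : ℝ) t, 0 ≤ ζ r) ∧
        (∫ r in (0 : ℝ)..t, ζ r) ≤ φ ∧
        y = ∫ r in (0 : ℝ)..t,
              ζ r * Real.exp (-μ * r - α * ∫ v in (0 : ℝ)..r, ζ v ^ 2)} with hSdef
  set T : ℝ := Real.sqrt (1 - Real.exp (-2 * μ * t)) / (2 * Real.sqrt (α * μ)) with hTdef
  have hT0 : 0 ≤ T := by positivity
  -- upper bound
  have hub : ∀ y ∈ S, y ≤ T := by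
    rintro y ⟨ζ, hmeas, ⟨M, hM⟩, h0, hbud, hy⟩
    set ζ' : ℝ → ℝ := fun r => if r ∈ Set.Icc (0:ℝ) t then ζ r else 0 with hζ'def
    have hm' : Measurable ζ' := Measurable.ite measurableSet_Icc hmeas measurable_const
    have hb' : ∀ x, ζ' x ≤ max M 0 := by
      intro x
      simp only [hζ'def]
      split
      · next hx => exact le_trans (hM x hx) (le_max_left _ _)
      · exact le_max_right _ _
    have h0' : ∀ x, 0 ≤ ζ' x := by
      intro x
      simp only [hζ'def]
      split
      · next hx => exact h0 x hx
      · exact le_refl 0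
    have heq : y = ∫ r in (0:ℝ)..t,
        ζ' r * Real.exp (-μ * r - α * ∫ v in (0:ℝ)..r, ζ' v ^ 2) := by
      rw [hy]
      apply intervalIntegral.integral_congr
      intro r hr
      rw [Set.uIcc_of_le ht0.le] at hr
      have h1 : ζ r = ζ' r := by simp only [hζ'def, if_pos hr]
      have h2 : (∫ v in (0:ℝ)..r, ζ v ^ 2) = ∫ v in (0:ℝ)..r, ζ' v ^ 2 := by
        apply intervalIntegral.integral_congr
        intro v hv
        rw [Set.uIcc_of_le hr.1] at hv
        have hvm : v ∈ Set.Icc (0:ℝ) t := ⟨hv.1, le_trans hv.2 hr.2⟩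
        simp only [hζ'def, if_pos hvm]
      dsimp only
      rw [h1, h2]
    rw [heq, hTdef]
    exact upper_bound hα hμ ht0 hm' hb' h0'
  have hbdd : BddAbove S := ⟨T, hub⟩
  apply le_antisymm
  · exact Real.sSup_le hub hT0
  · -- lower bound via near-optimal strategies
    set K : ℝ := Real.sqrt (μ/α) / Real.sqrt (1 - Real.exp (-2*μ*t)) with hKdef
    have hseq : ∀ n : ℕ,
        K * ((1 - Real.exp (-2*μ*(t - t/((n:ℝ)+2)))) / (2*μ)) ≤ sSup S := by
      intro n
      have hn2 : (1:ℝ) < (n:ℝ) + 2 := by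
        have := Nat.cast_nonneg (α := ℝ) n
        linarith
      have hε : 0 < t/((n:ℝ)+2) := by positivity
      have hεt : t/((n:ℝ)+2) < t := div_lt_self ht0 hn2
      obtain ⟨ζ, h1, h2, h3, h4, h5⟩ := lower_mem hα hμ ht0 hφ hcond hε hεt
      exact le_csSup hbdd ⟨ζ, h1, h2, h3, h4, h5.symm⟩
    have h1 : Filter.Tendsto (fun n : ℕ => t/((n:ℝ)+2)) Filter.atTop (nhds 0) := by
      apply Filter.Tendsto.div_atTop tendsto_const_nhds
      apply Filter.tendsto_atTop_add_const_right
      exact tendsto_natCast_atTop_atTop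
    have hEcont : Continuous fun x : ℝ => K * ((1 - Real.exp (-2*μ*(t - x)))/(2*μ)) := by
      fun_prop
    have hlim : Filter.Tendsto
        (fun n : ℕ => K * ((1 - Real.exp (-2*μ*(t - t/((n:ℝ)+2)))) / (2*μ)))
        Filter.atTop (nhds (K * ((1 - Real.exp (-2*μ*t)) / (2*μ)))) := by
      have h2 := (hEcont.tendsto 0).comp h1
      simp only [Function.comp, sub_zero] at h2
      exact h2
    have hKT : K * ((1 - Real.exp (-2*μ*t)) / (2*μ)) = T := by
      set E : ℝ := 1 - Real.exp (-2*μ*t) with hEdef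
      have hE : 0 < E := by
        have : Real.exp (-2*μ*t) < 1 := Real.exp_lt_one_iff.2 (by nlinarith)
        simp only [hEdef]; linarith
      have ha : (0:ℝ) < Real.sqrt α := Real.sqrt_pos.2 hα
      have hm : (0:ℝ) < Real.sqrt μ := Real.sqrt_pos.2 hμ
      have he : (0:ℝ) < Real.sqrt E := Real.sqrt_pos.2 hE
      have ha2 : Real.sqrt α ^ 2 = α := Real.sq_sqrt hα.le
      have hm2 : Real.sqrt μ ^ 2 = μ := Real.sq_sqrt hμ.le
      have he2 : Real.sqrt E ^ 2 = E := Real.sq_sqrt hE.le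
      have hqa : Real.sqrt (μ/α) = Real.sqrt μ / Real.sqrt α := by
        rw [show μ/α = (Real.sqrt μ / Real.sqrt α)^2 from by
          rw [div_pow, ha2, hm2]]
        exact Real.sqrt_sq (by positivity)
      have hqam : Real.sqrt (α*μ) = Real.sqrt α * Real.sqrt μ := by
        rw [show α*μ = (Real.sqrt α * Real.sqrt μ)^2 from by
          rw [mul_pow, ha2, hm2]]
        exact Real.sqrt_sq (by positivity)
      rw [hKdef, hTdef, hqa, hqam]
      have key : ∀ a m e : ℝ, 0 < a → 0 < m → 0 < e →
          m/a/e * (e^2/(2*m^2)) = e/(2*(a*m)) := by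
        intro a m e ha' hm' he'
        field_simp
      have hk := key (Real.sqrt α) (Real.sqrt μ) (Real.sqrt E) ha hm he
      rw [hm2, he2] at hk
      exact hk
    rw [← hKT]
    exact le_of_tendsto hlim (Filter.Eventually.of_forall hseq)
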